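/- (Theorem 3.1) Under the Gaussian elliptical model, the covariance matrix of the multivariate rank X̃ = D̃(X) S(X − μ) equals Γ Λ_{D,S} Γᵀ, where Λ_{D,S} is the diagonal matrix with diagonal entries λ_{D,S,i} = E[ g(‖z‖)² λᵢ zᵢ² / (Σ_{j=1}^p λⱼ zⱼ²) ]; that is, E[ D̃(X)² S(X−μ) S(X−μ)ᵀ ] = Γ Λ_{D,S} Γᵀ as p×p matrices (entrywise integrals with respect to ν). -/

import Mathlib

open MeasureTheory ProbabilityTheory Matrix Filter

/-- Euclidean norm on `Fin p → ℝ`. -/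
noncomputable def euclNorm {p : ℕ} (x : Fin p → ℝ) : ℝ := Real.sqrt (∑ i, x i ^ 2)

/-- Spatial sign: `S(x) = x/‖x‖` for `x ≠ 0`, and `S(0) = 0`. -/
noncomputable def signVec {p : ℕ} (x : Fin p → ℝ) : Fin p → ℝ :=
  if x = 0 then 0 else (euclNorm x)⁻¹ • x

namespace Stmt1Aux

variable {p : ℕ}

lemma sum_sq_nonneg (x : Fin p → ℝ) : 0 ≤ ∑ i, x i ^ 2 :=
  Finset.sum_nonneg fun _ _ => sq_nonneg _

lemma euclNorm_nonneg (x : Fin p → ℝ) : 0 ≤ euclNorm x := Real.sqrt_nonneg _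

lemma euclNorm_sq (x : Fin p → ℝ) : euclNorm x ^ 2 = ∑ i, x i ^ 2 :=
  Real.sq_sqrt (sum_sq_nonneg x)

lemma euclNorm_eq_zero {x : Fin p → ℝ} : euclNorm x = 0 ↔ x = 0 := by
  unfold euclNorm
  rw [show (0:ℝ) = Real.sqrt 0 by simp, Real.sqrt_inj (sum_sq_nonneg x) le_rfl]
  constructor
  · intro h
    funext i
    have := (Finset.sum_eq_zero_iff_of_nonneg (fun i _ => sq_nonneg (x i))).1 h i
      (Finset.mem_univ i)
    exact pow_eq_zero_iff (two_ne_zero) |>.1 this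
  · intro h; subst h; simp

lemma abs_le_euclNorm (x : Fin p → ℝ) (i : Fin p) : |x i| ≤ euclNorm x := by
  have h : x i ^ 2 ≤ ∑ j, x j ^ 2 :=
    Finset.single_le_sum (f := fun j => x j ^ 2) (fun j _ => sq_nonneg _) (Finset.mem_univ i)
  calc |x i| = Real.sqrt (x i ^ 2) := by rw [Real.sqrt_sq_eq_abs]
    _ ≤ euclNorm x := Real.sqrt_le_sqrt h

lemma abs_signVec_le_one (x : Fin p → ℝ) (i : Fin p) : |signVec x i| ≤ 1 := by
  unfold signVec
  split
  · simp
  · rename_i hx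
    have h0 : 0 < euclNorm x :=
      lt_of_le_of_ne (euclNorm_nonneg x) (fun h => hx (euclNorm_eq_zero.1 h.symm))
    have := abs_le_euclNorm x i
    simp only [Pi.smul_apply, smul_eq_mul, abs_mul, abs_inv, abs_of_pos h0]
    rw [inv_mul_le_iff₀ h0, mul_one]
    exact this

lemma sum_sq_mulVec (Γ : Matrix (Fin p) (Fin p) ℝ) (hΓ : Γᵀ * Γ = 1) (v : Fin p → ℝ) :
    ∑ i, (Γ.mulVec v i) ^ 2 = ∑ i, v i ^ 2 := by
  have h1 : ∀ w : Fin p → ℝ, ∑ i, w i ^ 2 = w ⬝ᵥ w := by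
    intro w; simp [dotProduct, sq]
  rw [h1, h1]
  calc Γ.mulVec v ⬝ᵥ Γ.mulVec v = ((Γ.mulVec v) ᵥ* Γ) ⬝ᵥ v := dotProduct_mulVec _ _ _
    _ = (v ᵥ* (Γᵀ * Γ)) ⬝ᵥ v := by rw [Matrix.vecMul_mulVec]
    _ = v ⬝ᵥ v := by rw [hΓ, Matrix.vecMul_one]

lemma euclNorm_mulVec (Γ : Matrix (Fin p) (Fin p) ℝ) (hΓ : Γᵀ * Γ = 1) (v : Fin p → ℝ) :
    euclNorm (Γ.mulVec v) = euclNorm v := by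
  unfold euclNorm; rw [sum_sq_mulVec Γ hΓ]

lemma mulVec_eq_zero (Γ : Matrix (Fin p) (Fin p) ℝ) (hΓ : Γᵀ * Γ = 1) {v : Fin p → ℝ}
    (h : Γ.mulVec v = 0) : v = 0 := by
  have : (Γᵀ * Γ).mulVec v = Γᵀ.mulVec (Γ.mulVec v) := (Matrix.mulVec_mulVec _ _ _).symm
  rw [hΓ, Matrix.one_mulVec, h, Matrix.mulVec_zero] at this
  exact this

lemma signVec_mulVec (Γ : Matrix (Fin p) (Fin p) ℝ) (hΓ : Γᵀ * Γ = 1) (v : Fin p → ℝ) :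
    signVec (Γ.mulVec v) = Γ.mulVec (signVec v) := by
  unfold signVec
  by_cases hv : v = 0
  · subst hv; simp
  · have h1 : Γ.mulVec v ≠ 0 := fun h => hv (mulVec_eq_zero Γ hΓ h)
    rw [if_neg h1, if_neg hv, euclNorm_mulVec Γ hΓ, Matrix.mulVec_smul]

lemma measurable_euclNorm : Measurable (euclNorm : (Fin p → ℝ) → ℝ) := by
  have : Continuous (euclNorm : (Fin p → ℝ) → ℝ) := by
    unfold euclNorm
    exact Real.continuous_sqrt.comp (continuous_finset_sum _ fun i _ => (continuous_apply i).pow 2)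
  exact this.measurable

lemma measurable_signVec : Measurable (signVec : (Fin p → ℝ) → (Fin p → ℝ)) := by
  unfold signVec
  refine Measurable.ite ?_ measurable_const ?_
  · have : {x : Fin p → ℝ | x = 0} = {(0 : Fin p → ℝ)} := by ext x; simp
    rw [this]
    exact (isClosed_singleton).measurableSet
  · refine measurable_pi_iff.2 fun i => ?_
    exact (measurable_euclNorm.inv).mul (measurable_pi_apply i)

lemma measurable_mulVec (M : Matrix (Fin p) (Fin p) ℝ) :
    Measurable fun z : Fin p → ℝ => M.mulVec z := by
  refine measurable_pi_iff.2 fun i => ?_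
  simp only [Matrix.mulVec, dotProduct]
  exact Finset.measurable_sum _ fun j _ => (measurable_pi_apply j).const_mul _

/-- Sign-flip of coordinate `k`. -/
def negk (k : Fin p) (z : Fin p → ℝ) : Fin p → ℝ := fun j => if j = k then -z j else z j

lemma negk_involutive (k : Fin p) : Function.Involutive (negk k) := by
  intro z; funext j; unfold negk; split_ifs <;> simp

lemma measurable_negk (k : Fin p) : Measurable (negk (p := p) k) := by
  refine measurable_pi_iff.2 fun j => ?_
  unfold negk
  split_ifs
  · exact (measurable_pi_apply j).neg
  · exact measurable_pi_apply j

lemma gaussian_map_neg : (gaussianReal 0 1).map (fun x : ℝ => -x) = gaussianReal 0 1 := by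
  have h := gaussianReal_map_const_mul (μ := 0) (v := 1) (-1 : ℝ)
  have h2 : (fun x : ℝ => -x) = ((-1 : ℝ) * ·) := by funext x; ring
  have h3 : (⟨(-1 : ℝ) ^ 2, sq_nonneg _⟩ : NNReal) = 1 := by ext; norm_num
  rw [h2, h]
  congr 1
  · ring
  · ext; simp

lemma measurePreserving_negk (k : Fin p) :
    MeasurePreserving (negk k) (Measure.pi fun _ : Fin p => gaussianReal 0 1)
      (Measure.pi fun _ : Fin p => gaussianReal 0 1) := by
  have h := measurePreserving_pi (fun _ : Fin p => gaussianReal 0 1)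
    (fun _ : Fin p => gaussianReal 0 1)
    (f := fun j x => if j = k then -x else x) (fun j => ?_)
  · exact h
  · by_cases hj : j = k
    · simp only [hj, if_pos rfl]
      exact ⟨measurable_neg, gaussian_map_neg⟩
    · simp only [if_neg hj]
      exact MeasurePreserving.id _

lemma euclNorm_negk (k : Fin p) (z : Fin p → ℝ) : euclNorm (negk k z) = euclNorm z := by
  unfold euclNorm negk
  congr 1
  refine Finset.sum_congr rfl fun j _ => ?_
  split_ifs <;> ring

lemma negk_smul (k : Fin p) (c : ℝ) (z : Fin p → ℝ) : negk k (c • z) = c • negk k z := by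
  funext j; unfold negk; simp only [Pi.smul_apply, smul_eq_mul]; split_ifs <;> ring

lemma negk_eq_zero (k : Fin p) {z : Fin p → ℝ} (h : negk k z = 0) : z = 0 := by
  have := congrArg (negk k) h
  rw [negk_involutive k z] at this
  rw [this]
  funext j; unfold negk; split_ifs <;> simp

lemma signVec_negk (k : Fin p) (z : Fin p → ℝ) : signVec (negk k z) = negk k (signVec z) := by
  unfold signVec
  by_cases hz : z = 0
  · subst hz
    have h0 : negk (p := p) k 0 = 0 := by funext j; unfold negk; split_ifs <;> simp
    simp [h0]
  · have h1 : negk k z ≠ 0 := fun h => hz (negk_eq_zero k h)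
    rw [if_neg h1, if_neg hz, euclNorm_negk, negk_smul]

lemma mulVec_diag_negk (k : Fin p) (d : Fin p → ℝ) (z : Fin p → ℝ) :
    (Matrix.diagonal d).mulVec (negk k z) = negk k ((Matrix.diagonal d).mulVec z) := by
  funext j
  simp only [Matrix.mulVec_diagonal, negk]
  split_ifs <;> ring


lemma measurable_F (g : ℝ → ℝ) (hg : Measurable g) (M : Matrix (Fin p) (Fin p) ℝ) (k l : Fin p) :
    Measurable fun z : Fin p → ℝ =>
      g (euclNorm z) ^ 2 * (signVec (M.mulVec z) k * signVec (M.mulVec z) l) := by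
  have hsk : ∀ m : Fin p, Measurable fun z : Fin p → ℝ => signVec (M.mulVec z) m := fun m =>
    (measurable_pi_apply m).comp (measurable_signVec.comp (measurable_mulVec M))
  exact ((hg.comp measurable_euclNorm).pow_const 2).mul ((hsk k).mul (hsk l))

lemma integrable_F (C : ℝ) (g : ℝ → ℝ) (hg : Measurable g) (hgnn : ∀ t, 0 ≤ g t)
    (hgb : ∀ t, g t ≤ C) (M : Matrix (Fin p) (Fin p) ℝ) (k l : Fin p) :
    Integrable (fun z : Fin p → ℝ =>
        g (euclNorm z) ^ 2 * (signVec (M.mulVec z) k * signVec (M.mulVec z) l))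
      (Measure.pi fun _ : Fin p => gaussianReal 0 1) := by
  refine (integrable_const (C ^ 2)).mono'
    (measurable_F g hg M k l).aestronglyMeasurable (ae_of_all _ fun z => ?_)
  have hgabs : |g (euclNorm z)| ≤ C := by
    rw [abs_of_nonneg (hgnn _)]; exact hgb _
  have ha := abs_signVec_le_one (M.mulVec z) k
  have hb := abs_signVec_le_one (M.mulVec z) l
  have h1 : ‖g (euclNorm z) ^ 2 * (signVec (M.mulVec z) k * signVec (M.mulVec z) l)‖
      = |g (euclNorm z)| ^ 2 * (|signVec (M.mulVec z) k| * |signVec (M.mulVec z) l|) := by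
    rw [Real.norm_eq_abs, abs_mul, abs_mul, abs_pow]
  rw [h1]
  calc |g (euclNorm z)| ^ 2 * (|signVec (M.mulVec z) k| * |signVec (M.mulVec z) l|)
      ≤ C ^ 2 * (1 * 1) := by
        refine mul_le_mul (pow_le_pow_left₀ (abs_nonneg _) hgabs 2) ?_ ?_ (by positivity)
        · exact mul_le_mul ha hb (abs_nonneg _) zero_le_one
        · positivity
    _ = C ^ 2 := by ring

lemma integral_offdiag (g : ℝ → ℝ) (hg : Measurable g) (M : Matrix (Fin p) (Fin p) ℝ)
    (hM : ∀ k z, M.mulVec (negk k z) = negk k (M.mulVec z)) {k l : Fin p} (hkl : k ≠ l) :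
    (∫ z, g (euclNorm z) ^ 2 * (signVec (M.mulVec z) k * signVec (M.mulVec z) l)
      ∂(Measure.pi fun _ : Fin p => gaussianReal 0 1)) = 0 := by
  set ν := Measure.pi fun _ : Fin p => gaussianReal 0 1 with hν
  set F : (Fin p → ℝ) → ℝ := fun z =>
    g (euclNorm z) ^ 2 * (signVec (M.mulVec z) k * signVec (M.mulVec z) l) with hF
  have hFmeas : Measurable F := measurable_F g hg M k l
  have hflip : ∀ z, F (negk k z) = -F z := by
    intro z
    have h1 : signVec (M.mulVec (negk k z)) = negk k (signVec (M.mulVec z)) := by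
      rw [hM, signVec_negk]
    have h2 : negk k (signVec (M.mulVec z)) k = -(signVec (M.mulVec z) k) := by
      unfold negk; rw [if_pos rfl]
    have h3 : negk k (signVec (M.mulVec z)) l = signVec (M.mulVec z) l := by
      unfold negk; rw [if_neg hkl.symm]
    simp only [hF, h1, h2, h3, euclNorm_negk]
    ring
  have key : ∫ z, F z ∂ν = -∫ z, F z ∂ν := by
    calc ∫ z, F z ∂ν = ∫ z, F z ∂(ν.map (negk k)) := by
          rw [(measurePreserving_negk k).map_eq]
      _ = ∫ z, F (negk k z) ∂ν :=
          integral_map (measurable_negk k).aemeasurable hFmeas.aestronglyMeasurable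
      _ = ∫ z, -F z ∂ν := by simp only [hflip]
      _ = -∫ z, F z ∂ν := integral_neg _
  linarith

lemma diag_pointwise (g : ℝ → ℝ) (lam : Fin p → ℝ) (hlam : ∀ i, 0 < lam i) (k : Fin p)
    (z : Fin p → ℝ) :
    g (euclNorm z) ^ 2 *
        (signVec ((Matrix.diagonal fun i => Real.sqrt (lam i)).mulVec z) k *
         signVec ((Matrix.diagonal fun i => Real.sqrt (lam i)).mulVec z) k)
      = g (euclNorm z) ^ 2 * lam k * z k ^ 2 / (∑ j, lam j * z j ^ 2) := by
  set w := (Matrix.diagonal fun i => Real.sqrt (lam i)).mulVec z with hw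
  by_cases hz : z = 0
  · subst hz
    have hw0 : w = 0 := by rw [hw, Matrix.mulVec_zero]
    simp [signVec, hw0]
  · have hwne : w ≠ 0 := by
      intro h
      apply hz
      funext j
      have hj : Real.sqrt (lam j) * z j = 0 := by
        have := congrFun h j
        rwa [hw, Matrix.mulVec_diagonal] at this
      have hsj : Real.sqrt (lam j) ≠ 0 := ne_of_gt (Real.sqrt_pos.2 (hlam j))
      exact (mul_eq_zero.1 hj).resolve_left hsj
    have hT : euclNorm w ^ 2 = ∑ j, lam j * z j ^ 2 := by
      rw [euclNorm_sq]
      refine Finset.sum_congr rfl fun j _ => ?_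
      rw [hw, Matrix.mulVec_diagonal, mul_pow, Real.sq_sqrt (hlam j).le]
    have hn : euclNorm w ≠ 0 := fun h => hwne (euclNorm_eq_zero.1 h)
    have hsign : signVec w k = (euclNorm w)⁻¹ * (Real.sqrt (lam k) * z k) := by
      unfold signVec
      rw [if_neg hwne]
      simp only [Pi.smul_apply, smul_eq_mul]
      rw [hw, Matrix.mulVec_diagonal]
    rw [hsign, ← hT]
    have hs2 : Real.sqrt (lam k) ^ 2 = lam k := Real.sq_sqrt (hlam k).le
    have hkey : Real.sqrt (lam k) * z k * (Real.sqrt (lam k) * z k) = lam k * z k ^ 2 := by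
      have h' : Real.sqrt (lam k) * z k * (Real.sqrt (lam k) * z k)
          = Real.sqrt (lam k) ^ 2 * z k ^ 2 := by ring
      rw [h', hs2]
    field_simp
    rw [hs2]
    ring

end Stmt1Aux

open Stmt1Aux

/-- (Theorem 3.1) Under the Gaussian elliptical model, the covariance matrix of the
multivariate rank `X̃ = D̃(X) S(X − μ)` equals `Γ Λ_{D,S} Γᵀ`, where `Λ_{D,S}` is
diagonal with entries `λ_{D,S,i} = E[ g(‖z‖)² λᵢ zᵢ² / (∑ⱼ λⱼ zⱼ²) ]`:
`E[ D̃(X)² S(X−μ) S(X−μ)ᵀ ] = Γ Λ_{D,S} Γᵀ` entrywise. -/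

theorem stmt_1 (p : ℕ)
    (ν : Measure (Fin p → ℝ))
    (hν : ν = Measure.pi fun _ => gaussianReal 0 1)
    (lam : Fin p → ℝ) (hlam : ∀ i, 0 < lam i)
    (Γ : Matrix (Fin p) (Fin p) ℝ) (hΓ : Γᵀ * Γ = 1)
    (μ : Fin p → ℝ)
    (Dtil : (Fin p → ℝ) → ℝ) (g : ℝ → ℝ)
    (hDmeas : Measurable Dtil) (hDnonneg : ∀ x, 0 ≤ Dtil x)
    (C : ℝ) (hDbdd : ∀ x, Dtil x ≤ C)
    (hgmeas : Measurable g) (hgnonneg : ∀ t, 0 ≤ g t) (hgbdd : ∀ t, g t ≤ C)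
    (hDg : ∀ u : Fin p → ℝ,
      Dtil (Γ.mulVec ((Matrix.diagonal fun i => Real.sqrt (lam i)).mulVec u) + μ)
        = g (euclNorm u)) :
    (Matrix.of fun i j =>
        ∫ z, (g (euclNorm z)) ^ 2 *
          (signVec (Γ.mulVec ((Matrix.diagonal fun k => Real.sqrt (lam k)).mulVec z)) i *
           signVec (Γ.mulVec ((Matrix.diagonal fun k => Real.sqrt (lam k)).mulVec z)) j) ∂ν)
      = Γ * Matrix.diagonal (fun i =>
          ∫ z, (g (euclNorm z)) ^ 2 * lam i * (z i) ^ 2 / (∑ j, lam j * (z j) ^ 2) ∂ν) * Γᵀ := by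
  subst hν
  set ν := Measure.pi fun _ : Fin p => gaussianReal 0 1 with hν
  set Λh : Matrix (Fin p) (Fin p) ℝ := Matrix.diagonal fun i => Real.sqrt (lam i) with hΛh
  set d : Fin p → ℝ := fun i =>
    ∫ z, (g (euclNorm z)) ^ 2 * lam i * (z i) ^ 2 / (∑ j, lam j * (z j) ^ 2) ∂ν with hd
  have hFint : ∀ k l : Fin p,
      Integrable (fun z => g (euclNorm z) ^ 2 * (signVec (Λh.mulVec z) k * signVec (Λh.mulVec z) l)) ν :=
    fun k l => integrable_F C g hgmeas hgnonneg hgbdd Λh k l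
  have hI : ∀ k l : Fin p,
      (∫ z, g (euclNorm z) ^ 2 * (signVec (Λh.mulVec z) k * signVec (Λh.mulVec z) l) ∂ν)
        = if k = l then d k else 0 := by
    intro k l
    by_cases hkl : k = l
    · subst hkl
      rw [if_pos rfl, hd]
      simp only [hΛh, diag_pointwise g lam hlam k]
    · rw [if_neg hkl]
      exact integral_offdiag g hgmeas Λh (fun k z => by rw [hΛh]; exact mulVec_diag_negk k _ z) hkl
  ext i j
  rw [Matrix.of_apply]
  have hL : ∀ z : Fin p → ℝ, g (euclNorm z) ^ 2 *
        (signVec (Γ.mulVec (Λh.mulVec z)) i * signVec (Γ.mulVec (Λh.mulVec z)) j)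
      = ∑ k, ∑ l, (Γ i k * Γ j l) *
          (g (euclNorm z) ^ 2 * (signVec (Λh.mulVec z) k * signVec (Λh.mulVec z) l)) := by
    intro z
    rw [signVec_mulVec Γ hΓ]
    simp only [Matrix.mulVec, dotProduct]
    rw [Finset.sum_mul_sum, Finset.mul_sum]
    refine Finset.sum_congr rfl fun k _ => ?_
    rw [Finset.mul_sum]
    refine Finset.sum_congr rfl fun l _ => ?_
    ring
  calc (∫ z, g (euclNorm z) ^ 2 *
        (signVec (Γ.mulVec (Λh.mulVec z)) i * signVec (Γ.mulVec (Λh.mulVec z)) j) ∂ν)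
      = ∫ z, ∑ k, ∑ l, (Γ i k * Γ j l) *
          (g (euclNorm z) ^ 2 * (signVec (Λh.mulVec z) k * signVec (Λh.mulVec z) l)) ∂ν := by
        simp only [hL]
    _ = ∑ k, ∑ l, (Γ i k * Γ j l) *
          ∫ z, g (euclNorm z) ^ 2 * (signVec (Λh.mulVec z) k * signVec (Λh.mulVec z) l) ∂ν := by
        rw [integral_finset_sum _ (fun k _ =>
          integrable_finset_sum _ fun l _ => (hFint k l).const_mul _)]
        refine Finset.sum_congr rfl fun k _ => ?_
        rw [integral_finset_sum _ fun l _ => (hFint k l).const_mul _]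
        refine Finset.sum_congr rfl fun l _ => ?_
        exact integral_const_mul _ _
    _ = ∑ k, Γ i k * d k * Γ j k := by
        refine Finset.sum_congr rfl fun k _ => ?_
        rw [Finset.sum_eq_single k]
        · rw [hI k k, if_pos rfl]; ring
        · intro l _ hlk
          rw [hI k l, if_neg (fun h => hlk h.symm), mul_zero]
        · intro h; exact absurd (Finset.mem_univ k) h
    _ = (Γ * Matrix.diagonal d * Γᵀ) i j := by
        rw [Matrix.mul_apply]
        refine (Finset.sum_congr rfl fun k _ => ?_).symm
        rw [Matrix.mul_diagonal, Matrix.transpose_apply]
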